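/- Let N ≥ 2. Define R_N(X, Y) = |X + Y|^N - |X|^N - N|X|^(N-2) X·Y for X, Y ∈ ℝ^N. Then there exists a constant c_N > 0 (one may take c_N = N(N-1)2^(N-4) for N ≥ 3) such that 0 ≤ R_N(X, Y) ≤ c_N(|Y|^N + |Y|²|X|^(N-2)) for all X, Y ∈ ℝ^N. -/

import Mathlib

open scoped RealInnerProductSpace
open Finset

lemma aux_half (n : ℕ) {a b : ℝ} (ha : 0 ≤ a) (hb : 0 ≤ b) :
    (a + b) ^ (n + 1) ≤ 2 ^ n * (a ^ (n + 1) + b ^ (n + 1)) := by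
  have hcv := (convexOn_pow (n + 1)).2 (Set.mem_Ici.mpr ha) (Set.mem_Ici.mpr hb)
    (by norm_num : (0:ℝ) ≤ 1/2) (by norm_num : (0:ℝ) ≤ 1/2) (by norm_num)
  simp only [smul_eq_mul] at hcv
  have h0 : a + b = 2 * ((1/2) * a + (1/2) * b) := by ring
  rw [h0, mul_pow]
  calc (2:ℝ) ^ (n+1) * ((1/2) * a + (1/2) * b) ^ (n+1)
      ≤ 2 ^ (n+1) * ((1/2) * a ^ (n+1) + (1/2) * b ^ (n+1)) := by
        apply mul_le_mul_of_nonneg_left hcv (by positivity)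
    _ = 2 ^ n * (a ^ (n+1) + b ^ (n+1)) := by rw [pow_succ]; ring

lemma aux_young (N : ℕ) (hN : 2 ≤ N) {a b : ℝ} (ha : 0 ≤ a) (hb : 0 ≤ b) :
    (N : ℝ) * (a ^ (N - 2) * b ^ 2) ≤ 2 * b ^ N + ((N : ℝ) - 2) * a ^ N := by
  have hN0 : (0:ℝ) < N := by exact_mod_cast (show 0 < N by omega)
  have hN2 : (2:ℝ) ≤ N := by exact_mod_cast hN
  have h := Real.geom_mean_le_arith_mean2_weighted (w₁ := 2 / N) (w₂ := ((N:ℝ) - 2) / N)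
    (p₁ := b ^ N) (p₂ := a ^ N) (by positivity) (div_nonneg (by linarith) hN0.le)
    (by positivity) (by positivity) (by field_simp; ring)
  have e1 : (b ^ N : ℝ) ^ ((2:ℝ) / N) = b ^ 2 := by
    rw [← Real.rpow_natCast b N, ← Real.rpow_mul hb,
      show (N:ℝ) * (2 / N) = 2 by field_simp,
      show (2:ℝ) = ((2:ℕ):ℝ) by norm_num, Real.rpow_natCast]
  have e2 : (a ^ N : ℝ) ^ (((N:ℝ) - 2) / N) = a ^ (N - 2) := by
    rw [← Real.rpow_natCast a N, ← Real.rpow_mul ha,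
      show (N:ℝ) * (((N:ℝ) - 2) / N) = ((N:ℝ) - 2) by field_simp,
      show (N:ℝ) - 2 = (((N - 2 : ℕ)):ℝ) by push_cast [Nat.cast_sub hN]; ring,
      Real.rpow_natCast]
  rw [e1, e2] at h
  have h2 := mul_le_mul_of_nonneg_left h hN0.le
  calc (N:ℝ) * (a ^ (N-2) * b ^ 2) = (N:ℝ) * (b ^ 2 * a ^ (N-2)) := by ring
    _ ≤ (N:ℝ) * (2 / N * b ^ N + ((N:ℝ) - 2) / N * a ^ N) := h2
    _ = 2 * b ^ N + ((N:ℝ) - 2) * a ^ N := by field_simp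

lemma aux_lower (N : ℕ) (hN : 2 ≤ N) {a b v s : ℝ} (ha : 0 ≤ a) (hb : 0 ≤ b)
    (hs : b ^ 2 = a ^ 2 + 2 * s + v ^ 2) : 0 ≤ b ^ N - a ^ N - (N : ℝ) * a ^ (N - 2) * s := by
  have hy := aux_young N hN ha hb
  have hpa : a ^ (N - 2) * a ^ 2 = a ^ N := by rw [← pow_add]; congr 1; omega
  have hv2 : 0 ≤ (N:ℝ) * a ^ (N - 2) * v ^ 2 := by positivity
  have e : (N:ℝ) * a ^ (N-2) * (2 * s)
      = (N:ℝ) * (a ^ (N-2) * b ^ 2) - (N:ℝ) * a ^ N - (N:ℝ) * a ^ (N-2) * v ^ 2 := by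
    linear_combination (-(N:ℝ) * a ^ (N-2)) * hs - (N:ℝ) * hpa
  linarith

lemma aux_choose (m j : ℕ) :
    2 * ((m + 3).choose (j + 2)) ≤ (m + 3) * (m + 2) * ((m + 1).choose j) := by
  have h1 := Nat.add_one_mul_choose_eq (m + 2) (j + 1)
  have h2 := Nat.add_one_mul_choose_eq (m + 1) j
  have key : (m + 3) * (m + 2) * ((m + 1).choose j)
      = (m + 3).choose (j + 2) * ((j + 2) * (j + 1)) := by
    calc (m+3) * (m+2) * ((m+1).choose j) = (m+3) * ((m+2) * ((m+1).choose j)) := by ring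
      _ = (m+3) * ((m+2).choose (j+1) * (j+1)) := by rw [h2]
      _ = ((m+2+1) * ((m+2).choose (j+1))) * (j+1) := by ring
      _ = ((m+3).choose (j+2) * (j+2)) * (j+1) := by rw [h1]
      _ = _ := by ring
  rw [key]
  have : 2 ≤ (j + 2) * (j + 1) := by nlinarith
  calc 2 * ((m+3).choose (j+2)) ≤ ((j+2)*(j+1)) * ((m+3).choose (j+2)) :=
        Nat.mul_le_mul_right _ this
    _ = (m+3).choose (j+2) * ((j+2)*(j+1)) := by ring

lemma aux_upper (m : ℕ) {a v t : ℝ} (ha : 0 ≤ a) (ht : |t| ≤ v) :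
    (a + t) ^ (m + 3) - a ^ (m + 3) - ((m : ℝ) + 3) * a ^ (m + 2) * t
        - (((m : ℝ) + 3) / 2) * a ^ (m + 1) * t ^ 2 + (((m : ℝ) + 3) / 2) * a ^ (m + 1) * v ^ 2
      ≤ (((m : ℝ) + 3) * ((m : ℝ) + 2) / 2) * (v ^ 2 * (a + v) ^ (m + 1)) := by
  have hv : 0 ≤ v := (abs_nonneg t).trans ht
  have ht2 : t ^ 2 ≤ v ^ 2 := by nlinarith [sq_abs t, abs_nonneg t]
  have expand : (a + t) ^ (m + 3)
      = a ^ (m + 3) + ((m : ℝ) + 3) * a ^ (m + 2) * t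
        + (((m + 3).choose 2 : ℕ) : ℝ) * a ^ (m + 1) * t ^ 2
        + ∑ j ∈ range (m + 1), t ^ (j + 3) * a ^ (m - j) * (((m + 3).choose (j + 3) : ℕ) : ℝ) := by
    rw [add_comm a t, add_pow]
    rw [← Finset.sum_range_add_sum_Ico _ (show 3 ≤ m + 3 + 1 by omega)]
    have h3 : ∑ k ∈ range 3, t ^ k * a ^ (m + 3 - k) * (((m + 3).choose k : ℕ) : ℝ)
        = a ^ (m + 3) + ((m : ℝ) + 3) * a ^ (m + 2) * t
          + (((m + 3).choose 2 : ℕ) : ℝ) * a ^ (m + 1) * t ^ 2 := by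
      simp [Finset.sum_range_succ]
      ring
    have h4 : ∑ k ∈ Finset.Ico 3 (m + 3 + 1), t ^ k * a ^ (m + 3 - k) * (((m + 3).choose k : ℕ) : ℝ)
        = ∑ j ∈ range (m + 1), t ^ (j + 3) * a ^ (m - j) * (((m + 3).choose (j + 3) : ℕ) : ℝ) := by
      rw [Finset.sum_Ico_eq_sum_range]
      rw [show m + 3 + 1 - 3 = m + 1 by omega]
      apply Finset.sum_congr rfl fun j hj => ?_
      rw [show 3 + j = j + 3 by omega, show m + 3 - (j + 3) = m - j by omega]
    rw [h3, h4]
  have expand2 : (a + v) ^ (m + 1)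
      = ∑ j ∈ range (m + 2), v ^ j * a ^ (m + 1 - j) * (((m + 1).choose j : ℕ) : ℝ) := by
    rw [add_comm a v, add_pow]
  have hR : (((m : ℝ) + 3) * ((m : ℝ) + 2) / 2) * (v ^ 2 * (a + v) ^ (m + 1))
      = (((m : ℝ) + 3) * ((m : ℝ) + 2) / 2) * (v ^ 2 * a ^ (m + 1))
        + ∑ j ∈ range (m + 1), (((m : ℝ) + 3) * ((m : ℝ) + 2) / 2)
            * (v ^ (j + 3) * a ^ (m - j) * (((m + 1).choose (j + 1) : ℕ) : ℝ)) := by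
    rw [expand2, Finset.mul_sum, Finset.mul_sum, Finset.sum_range_succ']
    simp only [pow_zero, Nat.choose_zero_right, Nat.cast_one, mul_one, one_mul, Nat.sub_zero]
    rw [add_comm]
    congr 1
    · apply Finset.sum_congr rfl fun j hj => ?_
      rw [show m + 1 - (j + 1) = m - j by omega]
      ring
  have hsum : ∑ j ∈ range (m + 1), t ^ (j + 3) * a ^ (m - j) * (((m + 3).choose (j + 3) : ℕ) : ℝ)
      ≤ ∑ j ∈ range (m + 1), (((m : ℝ) + 3) * ((m : ℝ) + 2) / 2)
          * (v ^ (j + 3) * a ^ (m - j) * (((m + 1).choose (j + 1) : ℕ) : ℝ)) := by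
    apply Finset.sum_le_sum fun j hj => ?_
    have hc : ((((m + 3).choose (j + 3) : ℕ)) : ℝ)
        ≤ (((m : ℝ) + 3) * ((m : ℝ) + 2) / 2) * (((m + 1).choose (j + 1) : ℕ) : ℝ) := by
      have h := aux_choose m (j + 1)
      have h' : ((2 * ((m + 3).choose (j + 1 + 2)) : ℕ) : ℝ)
          ≤ (((m + 3) * (m + 2) * ((m + 1).choose (j + 1)) : ℕ) : ℝ) := Nat.cast_le.mpr h
      push_cast at h'
      rw [show j + 1 + 2 = j + 3 by omega] at h'
      linarith
    have hts : t ^ (j + 3) ≤ v ^ (j + 3) := by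
      calc t ^ (j + 3) ≤ |t ^ (j + 3)| := le_abs_self _
        _ = |t| ^ (j + 3) := abs_pow t _
        _ ≤ v ^ (j + 3) := pow_le_pow_left₀ (abs_nonneg t) ht _
    have h1 : t ^ (j + 3) * a ^ (m - j) ≤ v ^ (j + 3) * a ^ (m - j) :=
      mul_le_mul_of_nonneg_right hts (pow_nonneg ha _)
    have h2 : (0:ℝ) ≤ v ^ (j + 3) * a ^ (m - j) := by positivity
    calc t ^ (j + 3) * a ^ (m - j) * (((m + 3).choose (j + 3) : ℕ) : ℝ)
        ≤ v ^ (j + 3) * a ^ (m - j) * (((m + 3).choose (j + 3) : ℕ) : ℝ) :=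
          mul_le_mul_of_nonneg_right h1 (Nat.cast_nonneg _)
      _ ≤ v ^ (j + 3) * a ^ (m - j)
            * ((((m : ℝ) + 3) * ((m : ℝ) + 2) / 2) * (((m + 1).choose (j + 1) : ℕ) : ℝ)) :=
          mul_le_mul_of_nonneg_left hc h2
      _ = (((m : ℝ) + 3) * ((m : ℝ) + 2) / 2)
            * (v ^ (j + 3) * a ^ (m - j) * (((m + 1).choose (j + 1) : ℕ) : ℝ)) := by ring
  have hch2 : (((m + 3).choose 2 : ℕ) : ℝ) = ((m : ℝ) + 3) * ((m : ℝ) + 2) / 2 := by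
    have h := Nat.add_one_mul_choose_eq (m + 2) 1
    simp only [Nat.succ_eq_add_one, Nat.choose_one_right] at h
    have h' : (((m + 2 + 1) * (m + 2) : ℕ) : ℝ) = (((m + 3).choose (1 + 1) * (1 + 1) : ℕ) : ℝ) :=
      congrArg _ h
    push_cast at h'
    linarith
  have hscalar : (((m + 3).choose 2 : ℕ) : ℝ) * a ^ (m + 1) * t ^ 2
      - (((m : ℝ) + 3) / 2) * a ^ (m + 1) * t ^ 2 + (((m : ℝ) + 3) / 2) * a ^ (m + 1) * v ^ 2
      ≤ (((m : ℝ) + 3) * ((m : ℝ) + 2) / 2) * (v ^ 2 * a ^ (m + 1)) := by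
    rw [hch2]
    have hA : (0:ℝ) ≤ a ^ (m + 1) := pow_nonneg ha _
    have hkey : (0:ℝ) ≤ (((m:ℝ) + 3) * ((m:ℝ) + 1) / 2) * (a ^ (m + 1) * (v ^ 2 - t ^ 2)) :=
      mul_nonneg (by positivity) (mul_nonneg hA (sub_nonneg.mpr ht2))
    nlinarith [hkey]
  rw [expand, hR]
  linarith [hsum, hscalar]

lemma aux_main (m : ℕ) {a b v s : ℝ} (ha : 0 ≤ a) (hv : 0 ≤ v)
    (htb : |b - a| ≤ v) (hs : b ^ 2 = a ^ 2 + 2 * s + v ^ 2) :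
    b ^ (m + 3) - a ^ (m + 3) - (((m + 3 : ℕ)) : ℝ) * a ^ (m + 1) * s ≤
      ((((m + 3 : ℕ)) : ℝ) * ((((m + 3 : ℕ)) : ℝ) - 1) * (2 : ℝ) ^ ((((m + 3 : ℕ)) : ℝ) - 4))
        * (v ^ (m + 3) + v ^ 2 * a ^ (m + 1)) := by
  obtain ⟨t, rfl⟩ : ∃ t, b = a + t := ⟨b - a, by ring⟩
  have ht : |t| ≤ v := by simpa using htb
  have h1 := aux_upper m ha ht
  have hid : (a + t) ^ (m + 3) - a ^ (m + 3) - (((m + 3 : ℕ)) : ℝ) * a ^ (m + 1) * s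
      = (a + t) ^ (m + 3) - a ^ (m + 3) - ((m : ℝ) + 3) * a ^ (m + 2) * t
        - (((m : ℝ) + 3) / 2) * a ^ (m + 1) * t ^ 2
        + (((m : ℝ) + 3) / 2) * a ^ (m + 1) * v ^ 2 := by
    push_cast
    linear_combination ((((m : ℝ) + 3) / 2) * a ^ (m + 1)) * hs
  have h2 := aux_half m ha hv
  have hc : (((m + 3 : ℕ)) : ℝ) * ((((m + 3 : ℕ)) : ℝ) - 1) * (2 : ℝ) ^ ((((m + 3 : ℕ)) : ℝ) - 4)
      = (((m : ℝ) + 3) * ((m : ℝ) + 2) / 2) * 2 ^ m / 2 * 2 := by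
    push_cast
    rw [show ((m : ℝ) + 3) - 4 = (m : ℝ) + (-1) by ring, Real.rpow_add (by norm_num),
      Real.rpow_natCast, Real.rpow_neg_one]
    ring
  have h3 : (((m : ℝ) + 3) * ((m : ℝ) + 2) / 2) * (v ^ 2 * (a + v) ^ (m + 1))
      ≤ (((m : ℝ) + 3) * ((m : ℝ) + 2) / 2) * (v ^ 2 * (2 ^ m * (a ^ (m + 1) + v ^ (m + 1)))) := by
    gcongr
  calc (a + t) ^ (m + 3) - a ^ (m + 3) - (((m + 3 : ℕ)) : ℝ) * a ^ (m + 1) * s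
      = _ := hid
    _ ≤ (((m : ℝ) + 3) * ((m : ℝ) + 2) / 2) * (v ^ 2 * (a + v) ^ (m + 1)) := h1
    _ ≤ (((m : ℝ) + 3) * ((m : ℝ) + 2) / 2) * (v ^ 2 * (2 ^ m * (a ^ (m + 1) + v ^ (m + 1)))) := h3
    _ = ((((m + 3 : ℕ)) : ℝ) * ((((m + 3 : ℕ)) : ℝ) - 1) * (2 : ℝ) ^ ((((m + 3 : ℕ)) : ℝ) - 4))
        * (v ^ (m + 3) + v ^ 2 * a ^ (m + 1)) := by rw [hc]; ring

/-- For `N ≥ 2` and `R_N(X,Y) = |X+Y|^N - |X|^N - N|X|^(N-2) X⬝Y`, there is `c_N > 0`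
(for `N ≥ 3` one may take `c_N = N(N-1)2^(N-4)`) with
`0 ≤ R_N(X,Y) ≤ c_N (|Y|^N + |Y|²|X|^(N-2))` for all `X, Y ∈ ℝ^N`. -/
theorem stmt6 (N : ℕ) (hN : 2 ≤ N) :
    (∃ c : ℝ, 0 < c ∧ ∀ X Y : EuclideanSpace ℝ (Fin N),
        0 ≤ ‖X + Y‖ ^ N - ‖X‖ ^ N - (N : ℝ) * ‖X‖ ^ (N - 2) * ⟪X, Y⟫ ∧
        ‖X + Y‖ ^ N - ‖X‖ ^ N - (N : ℝ) * ‖X‖ ^ (N - 2) * ⟪X, Y⟫ ≤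
          c * (‖Y‖ ^ N + ‖Y‖ ^ 2 * ‖X‖ ^ (N - 2))) ∧
    (3 ≤ N → ∀ X Y : EuclideanSpace ℝ (Fin N),
        ‖X + Y‖ ^ N - ‖X‖ ^ N - (N : ℝ) * ‖X‖ ^ (N - 2) * ⟪X, Y⟫ ≤
          ((N : ℝ) * ((N : ℝ) - 1) * (2 : ℝ) ^ ((N : ℝ) - 4)) *
            (‖Y‖ ^ N + ‖Y‖ ^ 2 * ‖X‖ ^ (N - 2))) := by
  constructor
  · by_cases h2 : N = 2
    · subst h2
      refine ⟨1, one_pos, fun X Y => ?_⟩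
      have hs := norm_add_sq_real X Y
      simp only [show 2 - 2 = 0 from rfl, pow_zero, mul_one, Nat.cast_ofNat]
      constructor
      · linarith [sq_nonneg ‖Y‖]
      · linarith [sq_nonneg ‖Y‖]
    · have hN3 : 3 ≤ N := by omega
      obtain ⟨m, rfl⟩ : ∃ m, N = m + 3 := ⟨N - 3, by omega⟩
      refine ⟨(((m + 3 : ℕ)) : ℝ) * ((((m + 3 : ℕ)) : ℝ) - 1)
        * (2 : ℝ) ^ ((((m + 3 : ℕ)) : ℝ) - 4), ?_, fun X Y => ?_⟩
      · have h1 : (0:ℝ) < (((m + 3 : ℕ)) : ℝ) * ((((m + 3 : ℕ)) : ℝ) - 1) := by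
          push_cast
          nlinarith [Nat.cast_nonneg (α := ℝ) m]
        exact mul_pos h1 (Real.rpow_pos_of_pos (by norm_num) _)
      · constructor
        · exact aux_lower (m + 3) (by omega) (norm_nonneg X) (norm_nonneg (X + Y))
            (norm_add_sq_real X Y)
        · exact aux_main m (norm_nonneg X) (norm_nonneg Y)
            (by simpa using abs_norm_sub_norm_le (X + Y) X) (norm_add_sq_real X Y)
  · intro hN3 X Y
    obtain ⟨m, rfl⟩ : ∃ m, N = m + 3 := ⟨N - 3, by omega⟩
    exact aux_main m (norm_nonneg X) (norm_nonneg Y)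
      (by simpa using abs_norm_sub_norm_le (X + Y) X) (norm_add_sq_real X Y)
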